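/- Hadamard-type bound for capacity: if K and W are N×N positive semidefinite Hermitian matrices with eigenvalue decompositions K = P Λ_K P† and W = V Λ_W V† (P, V unitary), then det(I + σ^{-2} K W) ≤ det(I + σ^{-2} Λ_K Λ_W) when the eigenvalues in Λ_K and Λ_W are sorted appropriately, with equality when P = V. -/

import Mathlib

open Matrix ComplexOrder
open Finset Equiv

variable {N k : ℕ}


/-- Tangent-line inequality for `log (1 + eˣ)`, via weighted AM-GM. -/
lemma tangent_log (u v : ℝ) (hu : 0 < u) (hv : 0 < v) :
    Real.log (1 + u) - Real.log (1 + v) ≤ (u / (1 + u)) * (Real.log u - Real.log v) := by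
  have h1u : (0:ℝ) < 1 + u := by linarith
  have h1v : (0:ℝ) < 1 + v := by linarith
  have key : (v / u) ^ (u / (1 + u)) ≤ (1 + v) / (1 + u) := by
    have := Real.geom_mean_le_arith_mean2_weighted
      (by positivity : (0:ℝ) ≤ 1 / (1 + u)) (by positivity : (0:ℝ) ≤ u / (1 + u))
      (by norm_num : (0:ℝ) ≤ 1) (by positivity : (0:ℝ) ≤ v / u)
      (by field_simp)
    rw [Real.one_rpow, one_mul] at this
    calc (v / u) ^ (u / (1 + u)) ≤ 1 / (1 + u) * 1 + u / (1 + u) * (v / u) := this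
      _ = (1 + v) / (1 + u) := by field_simp
  have hlog := Real.log_le_log (by positivity) key
  rw [Real.log_rpow (by positivity), Real.log_div (by positivity) (by positivity),
    Real.log_div (by positivity) (by positivity)] at hlog
  nlinarith [hlog]

/-- Abel-summation style: decreasing nonneg weights against nonpositive partial sums. -/
lemma abel_nonpos (m : ℕ) (t d : ℕ → ℝ) (ht0 : ∀ i < m, 0 ≤ t i)
    (hta : ∀ i j, i ≤ j → j < m → t j ≤ t i)
    (hS : ∀ k ≤ m, ∑ i ∈ range k, d i ≤ 0) :
    ∑ i ∈ range m, t i * d i ≤ 0 := by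
  induction m generalizing t with
  | zero => simp
  | succ s ih =>
    have hsplit : ∑ i ∈ range (s+1), t i * d i
        = (∑ i ∈ range s, (t i - t s) * d i) + t s * ∑ i ∈ range (s+1), d i := by
      calc ∑ i ∈ range (s+1), t i * d i
          = ∑ i ∈ range s, ((t i - t s) * d i + t s * d i) + t s * d s := by
            rw [Finset.sum_range_succ]
            congr 1
            exact Finset.sum_congr rfl fun i _ => by ring
        _ = (∑ i ∈ range s, (t i - t s) * d i) + t s * ∑ i ∈ range (s+1), d i := by
            rw [Finset.sum_add_distrib, Finset.sum_range_succ, ← Finset.mul_sum]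
            ring
    rw [hsplit]
    have h1 : ∑ i ∈ range s, (t i - t s) * d i ≤ 0 := by
      apply ih (fun i => t i - t s)
      · intro i hi
        have := hta i s (le_of_lt hi) (Nat.lt_succ_self s); linarith
      · intro i j hij hj
        have := hta i j hij (hj.trans (Nat.lt_succ_self s)); linarith
      · intro k hk; exact hS k (hk.trans (Nat.le_succ s))
    have h2 : t s * ∑ i ∈ range (s+1), d i ≤ 0 :=
      mul_nonpos_of_nonneg_of_nonpos (ht0 s (Nat.lt_succ_self s)) (hS (s+1) le_rfl)
    linarith
/-- positive case of the majorization lemma -/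
lemma logmaj_pos (n : ℕ) (x y : ℕ → ℝ) (hx : ∀ i < n, 0 < x i) (hy : ∀ i < n, 0 < y i)
    (hxa : ∀ i j, i ≤ j → j < n → x j ≤ x i)
    (h : ∀ k ≤ n, ∏ i ∈ range k, x i ≤ ∏ i ∈ range k, y i) :
    ∏ i ∈ range n, (1 + x i) ≤ ∏ i ∈ range n, (1 + y i) := by
  have hx1 : ∀ i ∈ range n, (0:ℝ) < 1 + x i := fun i hi => by
    have := hx i (mem_range.1 hi); linarith
  have hy1 : ∀ i ∈ range n, (0:ℝ) < 1 + y i := fun i hi => by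
    have := hy i (mem_range.1 hi); linarith
  rw [← Real.exp_log (Finset.prod_pos hx1), ← Real.exp_log (Finset.prod_pos hy1)]
  apply Real.exp_le_exp.2
  rw [Real.log_prod (fun i hi => (hx1 i hi).ne'), Real.log_prod (fun i hi => (hy1 i hi).ne')]
  have key : ∑ i ∈ range n, (Real.log (1 + x i) - Real.log (1 + y i)) ≤ 0 := by
    have step : ∀ i ∈ range n,
        Real.log (1 + x i) - Real.log (1 + y i)
          ≤ (x i / (1 + x i)) * (Real.log (x i) - Real.log (y i)) := fun i hi =>
      tangent_log _ _ (hx i (mem_range.1 hi)) (hy i (mem_range.1 hi))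
    calc ∑ i ∈ range n, (Real.log (1 + x i) - Real.log (1 + y i))
        ≤ ∑ i ∈ range n, (x i / (1 + x i)) * (Real.log (x i) - Real.log (y i)) :=
          Finset.sum_le_sum step
      _ ≤ 0 := by
          apply abel_nonpos n (fun i => x i / (1 + x i))
            (fun i => Real.log (x i) - Real.log (y i))
          · intro i hi
            have h1 := hx i hi
            positivity
          · intro i j hij hj
            have hxj := hx j hj
            have hxi := hx i (lt_of_le_of_lt hij hj)
            have hle := hxa i j hij hj
            rw [div_le_div_iff₀ (by linarith) (by linarith)]
            nlinarith
          · intro k hk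
            have hk1 : ∀ i ∈ range k, (0:ℝ) < x i := fun i hi =>
              hx i (lt_of_lt_of_le (mem_range.1 hi) hk)
            have hk2 : ∀ i ∈ range k, (0:ℝ) < y i := fun i hi =>
              hy i (lt_of_lt_of_le (mem_range.1 hi) hk)
            rw [Finset.sum_sub_distrib,
              ← Real.log_prod (fun i hi => (hk1 i hi).ne'),
              ← Real.log_prod (fun i hi => (hk2 i hi).ne')]
            have := Real.log_le_log (Finset.prod_pos hk1) (h k hk)
            linarith
  have := Finset.sum_sub_distrib (s := range n)
    (f := fun i => Real.log (1 + x i)) (g := fun i => Real.log (1 + y i))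
  rw [this] at key
  linarith

/-- the majorization lemma, allowing zeros -/
lemma logmaj (n : ℕ) (x y : ℕ → ℝ) (hx0 : ∀ i, 0 ≤ x i) (hy0 : ∀ i, 0 ≤ y i)
    (hxa : ∀ i j, i ≤ j → x j ≤ x i)
    (h : ∀ k ≤ n, ∏ i ∈ range k, x i ≤ ∏ i ∈ range k, y i) :
    ∏ i ∈ range n, (1 + x i) ≤ ∏ i ∈ range n, (1 + y i) := by
  induction n with
  | zero => simp
  | succ s ih =>
    rcases eq_or_lt_of_le (hx0 s) with hzero | hpos
    · rw [Finset.prod_range_succ, Finset.prod_range_succ, ← hzero]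
      have h1 : ∏ i ∈ range s, (1 + x i) ≤ ∏ i ∈ range s, (1 + y i) :=
        ih (fun k hk => h k (hk.trans (Nat.le_succ s)))
      have h2 : (0:ℝ) < ∏ i ∈ range s, (1 + x i) :=
        Finset.prod_pos fun i _ => by have := hx0 i; linarith
      have h3 : (1:ℝ) ≤ 1 + y s := by have := hy0 s; linarith
      nlinarith
    · -- all x i positive for i ≤ s, hence also all y i positive
      have hxpos : ∀ i < s + 1, 0 < x i := fun i hi =>
        lt_of_lt_of_le hpos (hxa i s (Nat.lt_succ_iff.1 hi))
      have hypos : ∀ i < s + 1, 0 < y i := by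
        by_contra hcon
        push_neg at hcon
        obtain ⟨j, hj, hyj⟩ := hcon
        have : ∏ i ∈ range (s+1), y i = 0 := by
          have hyj0 : y j = 0 := le_antisymm hyj (hy0 j)
          exact Finset.prod_eq_zero (mem_range.2 hj) hyj0
        have hprod : (0:ℝ) < ∏ i ∈ range (s+1), x i :=
          Finset.prod_pos fun i hi => hxpos i (mem_range.1 hi)
        have hle := h (s+1) le_rfl
        rw [this] at hle
        linarith
      exact logmaj_pos (s+1) x y hxpos hypos
        (fun i j hij hj => hxa i j hij) h

/-- Expansion of `det (X * Y)` for rectangular `X, Y` as a sum over column selections. -/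
lemma det_mul_expand (X : Matrix (Fin k) (Fin N) ℂ) (Y : Matrix (Fin N) (Fin k) ℂ) :
    (X * Y).det = ∑ f : Fin k → Fin N, (∏ j, Y (f j) j) * (X.submatrix id f).det := by
  have h1 : (X * Y).det
      = ∑ f : Fin k → Fin N, ∑ σ : Perm (Fin k),
          ((Equiv.Perm.sign σ : ℤ) : ℂ) * ∏ i, X (σ i) (f i) * Y (f i) i := by
    simp only [det_apply', mul_apply, prod_univ_sum, mul_sum, Fintype.piFinset_univ]
    rw [Finset.sum_comm]
  rw [h1]
  refine Finset.sum_congr rfl fun f _ => ?_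
  rw [det_apply', Finset.mul_sum]
  refine Finset.sum_congr rfl fun σ _ => ?_
  rw [Finset.prod_mul_distrib]
  simp only [submatrix_apply, id_eq]
  ring

/-- Cauchy–Binet style identity for `Rᴴ D R` with `D` real diagonal. -/
lemma cb_sum (R : Matrix (Fin N) (Fin k) ℂ) (a : Fin N → ℝ) :
    (k.factorial : ℂ) * (Rᴴ * Matrix.diagonal (fun i => (a i : ℂ)) * R).det
      = ∑ f : Fin k → Fin N, (∏ j, (a (f j) : ℂ)) *
          ((Complex.normSq ((R.submatrix f id).det) : ℝ) : ℂ) := by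
  classical
  -- Step A : expansion of the determinant
  have hA : (Rᴴ * Matrix.diagonal (fun i => (a i : ℂ)) * R).det
      = ∑ f : Fin k → Fin N, (∏ j, (a (f j) : ℂ)) * (∏ j, R (f j) j) *
          (starRingEnd ℂ) ((R.submatrix f id).det) := by
    rw [det_mul_expand]
    refine Finset.sum_congr rfl fun f _ => ?_
    have hsub : (Rᴴ * Matrix.diagonal (fun i => (a i : ℂ))).submatrix id f
        = Matrix.of (fun p q => ((a (f q) : ℂ)) * ((R.submatrix f id)ᴴ p q)) := by
      ext p q
      simp [Matrix.mul_diagonal, Matrix.conjTranspose_apply, mul_comm]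
    rw [hsub, Matrix.det_mul_row, Matrix.det_conjTranspose, starRingEnd_apply]
    ring
  -- Step B : symmetrization
  have hB : ∑ f : Fin k → Fin N, (∏ j, (a (f j) : ℂ)) *
          ((Complex.normSq ((R.submatrix f id).det) : ℝ) : ℂ)
      = (k.factorial : ℂ) * ∑ f : Fin k → Fin N, (∏ j, (a (f j) : ℂ)) * (∏ j, R (f j) j) *
          (starRingEnd ℂ) ((R.submatrix f id).det) := by
    have hnormSq : ∀ f : Fin k → Fin N,
        ((Complex.normSq ((R.submatrix f id).det) : ℝ) : ℂ)
          = (R.submatrix f id).det * (starRingEnd ℂ) ((R.submatrix f id).det) := fun f =>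
      (Complex.mul_conj _).symm
    calc ∑ f : Fin k → Fin N, (∏ j, (a (f j) : ℂ)) *
            ((Complex.normSq ((R.submatrix f id).det) : ℝ) : ℂ)
        = ∑ f : Fin k → Fin N, ∑ τ : Perm (Fin k),
            ((Equiv.Perm.sign τ : ℤ) : ℂ) * (∏ j, (a (f j) : ℂ)) * (∏ j, R (f (τ j)) j) *
              (starRingEnd ℂ) ((R.submatrix f id).det) := by
          refine Finset.sum_congr rfl fun f _ => ?_
          rw [hnormSq f]
          have hdet : (R.submatrix f id).det
              = ∑ τ : Perm (Fin k), ((Equiv.Perm.sign τ : ℤ) : ℂ) * ∏ j, R (f (τ j)) j := by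
            rw [det_apply']
            exact Finset.sum_congr rfl fun τ _ => by simp [Matrix.submatrix_apply]
          rw [hdet, Finset.sum_mul, Finset.mul_sum]
          exact Finset.sum_congr rfl fun τ _ => by ring
      _ = ∑ τ : Perm (Fin k), ∑ f : Fin k → Fin N,
            ((Equiv.Perm.sign τ : ℤ) : ℂ) * (∏ j, (a (f j) : ℂ)) * (∏ j, R (f (τ j)) j) *
              (starRingEnd ℂ) ((R.submatrix f id).det) := Finset.sum_comm
      _ = ∑ τ : Perm (Fin k), ∑ g : Fin k → Fin N,
            (∏ j, (a (g j) : ℂ)) * (∏ j, R (g j) j) *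
              (starRingEnd ℂ) ((R.submatrix g id).det) := by
          refine Finset.sum_congr rfl fun τ _ => ?_
          -- substitute f = g ∘ τ⁻¹
          have hsign : ((Equiv.Perm.sign τ : ℤ) : ℂ) * ((Equiv.Perm.sign τ : ℤ) : ℂ) = 1 := by
            rcases Int.units_eq_one_or (Equiv.Perm.sign τ) with h | h <;> simp [h]
          refine (Fintype.sum_equiv
            (⟨fun g => g ∘ (τ⁻¹ : Perm (Fin k)), fun g => g ∘ (τ : Perm (Fin k)),
              fun g => by ext j; simp, fun g => by ext j; simp⟩ :
                (Fin k → Fin N) ≃ (Fin k → Fin N))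
            _ _ fun g => ?_).symm
          show (∏ j, (a (g j) : ℂ)) * (∏ j, R (g j) j) * (starRingEnd ℂ) ((R.submatrix g id).det)
            = ((Equiv.Perm.sign τ : ℤ) : ℂ) * (∏ j, (a ((g ∘ (τ⁻¹ : Perm (Fin k))) j) : ℂ)) *
              (∏ j, R ((g ∘ (τ⁻¹ : Perm (Fin k))) (τ j)) j) *
              (starRingEnd ℂ) ((R.submatrix (g ∘ (τ⁻¹ : Perm (Fin k))) id).det)
          have h1 : ∏ j, (a ((g ∘ (τ⁻¹ : Perm (Fin k))) j) : ℂ) = ∏ j, (a (g j) : ℂ) :=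
            Equiv.prod_comp (τ⁻¹ : Perm (Fin k)) (fun j => (a (g j) : ℂ))
          have h2 : (∏ j, R ((g ∘ (τ⁻¹ : Perm (Fin k))) (τ j)) j) = ∏ j, R (g j) j := by
            refine Finset.prod_congr rfl fun j _ => by simp
          have h3 : (R.submatrix (g ∘ (τ⁻¹ : Perm (Fin k))) id).det
              = ((Equiv.Perm.sign τ : ℤ) : ℂ) * (R.submatrix g id).det := by
            have : R.submatrix (g ∘ (τ⁻¹ : Perm (Fin k))) id
                = (R.submatrix g id).submatrix (τ⁻¹ : Perm (Fin k)) id := by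
              ext p q; simp
            rw [this, Matrix.det_permute, Equiv.Perm.sign_inv]
          rw [h1, h2, h3, _root_.map_mul]
          have h4 : (starRingEnd ℂ) ((Equiv.Perm.sign τ : ℤ) : ℂ)
              = ((Equiv.Perm.sign τ : ℤ) : ℂ) := by
            rcases Int.units_eq_one_or (Equiv.Perm.sign τ) with h | h <;> simp [h]
          rw [h4]
          calc (∏ j, (a (g j) : ℂ)) * (∏ j, R (g j) j) * (starRingEnd ℂ) ((R.submatrix g id).det)
              = (((Equiv.Perm.sign τ : ℤ) : ℂ) * ((Equiv.Perm.sign τ : ℤ) : ℂ)) *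
                ((∏ j, (a (g j) : ℂ)) * (∏ j, R (g j) j) *
                  (starRingEnd ℂ) ((R.submatrix g id).det)) := by rw [hsign, one_mul]
            _ = _ := by ring
      _ = (k.factorial : ℂ) * ∑ f : Fin k → Fin N, (∏ j, (a (f j) : ℂ)) * (∏ j, R (f j) j) *
            (starRingEnd ℂ) ((R.submatrix f id).det) := by
          rw [Finset.sum_const, Finset.card_univ, Fintype.card_perm, Fintype.card_fin, nsmul_eq_mul]
  rw [hA, hB]

lemma strictMono_fin_le {f : Fin k → Fin N} (hf : StrictMono f) (j : Fin k) :
    (j : ℕ) ≤ (f j : ℕ) := by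
  have : ∀ m : ℕ, ∀ j : Fin k, (j : ℕ) = m → m ≤ (f j : ℕ) := by
    intro m
    induction m with
    | zero => intro j _; exact Nat.zero_le _
    | succ s ihs =>
      intro j hj
      have hjs : s < k := by omega
      have hlt : (⟨s, hjs⟩ : Fin k) < j := by
        rw [Fin.lt_def]; simp only [Fin.val_mk]; omega
      have h1 := hf hlt
      have h2 := ihs ⟨s, hjs⟩ rfl
      rw [Fin.lt_def] at h1
      omega
  exact this _ j rfl

lemma inj_prod_le (hk : k ≤ N) (g : Fin k → Fin N) (hg : Function.Injective g)
    (a : Fin N → ℝ) (ha0 : ∀ i, 0 ≤ a i) (haa : Antitone a) :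
    ∏ j, a (g j) ≤ ∏ j : Fin k, a (Fin.castLE hk j) := by
  classical
  set s : Finset (Fin N) := Finset.image g Finset.univ with hs
  have hcard : s.card = k := by
    rw [hs, Finset.card_image_of_injective _ hg, Finset.card_univ, Fintype.card_fin]
  set o := s.orderEmbOfFin hcard with ho
  have himg : Finset.image (fun j => o j) Finset.univ = s := by
    apply Finset.eq_of_subset_of_card_le
    · intro x hx
      obtain ⟨j, _, rfl⟩ := Finset.mem_image.1 hx
      exact Finset.orderEmbOfFin_mem s hcard j
    · rw [hcard, Finset.card_image_of_injective _ o.injective, Finset.card_univ,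
        Fintype.card_fin]
  have h1 : ∏ j, a (g j) = ∏ i ∈ s, a i := by
    rw [hs, Finset.prod_image (fun x _ y _ h => hg h)]
  have h2 : ∏ i ∈ s, a i = ∏ j, a (o j) := by
    rw [← himg, Finset.prod_image (fun x _ y _ h => o.injective h)]
  rw [h1, h2]
  apply Finset.prod_le_prod (fun j _ => ha0 _)
  intro j _
  apply haa
  have := strictMono_fin_le o.strictMono j
  rw [Fin.le_def]
  simpa using this

lemma cb_sum_re (R : Matrix (Fin N) (Fin k) ℂ) (a : Fin N → ℝ) :
    (k.factorial : ℝ) * (Rᴴ * Matrix.diagonal (fun i => (a i : ℂ)) * R).det.re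
      = ∑ f : Fin k → Fin N, (∏ j, a (f j)) * Complex.normSq ((R.submatrix f id).det) := by
  have h := congrArg Complex.re (cb_sum R a)
  have hL : ((k.factorial : ℂ) * (Rᴴ * Matrix.diagonal (fun i => (a i : ℂ)) * R).det).re
      = (k.factorial : ℝ) * (Rᴴ * Matrix.diagonal (fun i => (a i : ℂ)) * R).det.re := by
    simp [Complex.mul_re]
  have hR : (∑ f : Fin k → Fin N, (∏ j, (a (f j) : ℂ)) *
        ((Complex.normSq ((R.submatrix f id).det) : ℝ) : ℂ)).re
      = ∑ f : Fin k → Fin N, (∏ j, a (f j)) * Complex.normSq ((R.submatrix f id).det) := by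
    rw [Complex.re_sum]
    refine Finset.sum_congr rfl fun f _ => ?_
    rw [← Complex.ofReal_prod, ← Complex.ofReal_mul, Complex.ofReal_re]
  rw [hL, hR] at h
  exact h

lemma gram_det_re_nonneg (R : Matrix (Fin N) (Fin k) ℂ) : 0 ≤ (Rᴴ * R).det.re := by
  have h := cb_sum_re R (fun _ => 1)
  simp only [Complex.ofReal_one, Matrix.diagonal_one, Matrix.mul_one, Finset.prod_const_one,
    one_mul] at h
  have hpos : (0:ℝ) < (k.factorial : ℝ) := by positivity
  nlinarith [Finset.sum_nonneg (fun f (_ : f ∈ (Finset.univ : Finset (Fin k → Fin N))) =>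
    Complex.normSq_nonneg ((R.submatrix f id).det))]

lemma compress_det_le (hk : k ≤ N) (R : Matrix (Fin N) (Fin k) ℂ) (a : Fin N → ℝ)
    (ha0 : ∀ i, 0 ≤ a i) (haa : Antitone a) :
    (Rᴴ * Matrix.diagonal (fun i => (a i : ℂ)) * R).det.re
      ≤ (∏ j : Fin k, a (Fin.castLE hk j)) * (Rᴴ * R).det.re := by
  classical
  have h1 := cb_sum_re R a
  have h2 := cb_sum_re R (fun _ => 1)
  simp only [Complex.ofReal_one, Matrix.diagonal_one, Matrix.mul_one, Finset.prod_const_one,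
    one_mul] at h2
  have hterm : ∀ f : Fin k → Fin N,
      (∏ j, a (f j)) * Complex.normSq ((R.submatrix f id).det)
        ≤ (∏ j : Fin k, a (Fin.castLE hk j)) * Complex.normSq ((R.submatrix f id).det) := by
    intro f
    by_cases hinj : Function.Injective f
    · exact mul_le_mul_of_nonneg_right (inj_prod_le hk f hinj a ha0 haa)
        (Complex.normSq_nonneg _)
    · have : (R.submatrix f id).det = 0 := by
        rw [Function.not_injective_iff] at hinj
        obtain ⟨p, q, hpq, hne⟩ := hinj
        apply Matrix.det_zero_of_row_eq hne
        ext j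
        simp [Matrix.submatrix_apply, hpq]
      rw [this]
      simp
  have hsum : ∑ f : Fin k → Fin N, (∏ j, a (f j)) * Complex.normSq ((R.submatrix f id).det)
      ≤ (∏ j : Fin k, a (Fin.castLE hk j)) *
        ∑ f : Fin k → Fin N, Complex.normSq ((R.submatrix f id).det) := by
    rw [Finset.mul_sum]
    exact Finset.sum_le_sum fun f _ => hterm f
  have hpos : (0:ℝ) < (k.factorial : ℝ) := by positivity
  rw [← mul_le_mul_iff_right₀ hpos]
  rw [h1]
  calc ∑ f : Fin k → Fin N, (∏ j, a (f j)) * Complex.normSq ((R.submatrix f id).det)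
      ≤ (∏ j : Fin k, a (Fin.castLE hk j)) *
        ∑ f : Fin k → Fin N, Complex.normSq ((R.submatrix f id).det) := hsum
    _ = (k.factorial : ℝ) * ((∏ j : Fin k, a (Fin.castLE hk j)) * (Rᴴ * R).det.re) := by
        rw [← h2]; ring

lemma conj_isometry_cancel {n m : ℕ} (A : Matrix (Fin n) (Fin n) ℂ)
    (B : Matrix (Fin n) (Fin m) ℂ) (hA : A * Aᴴ = 1) :
    (Aᴴ * B)ᴴ * (Aᴴ * B) = Bᴴ * B := by
  rw [Matrix.conjTranspose_mul, Matrix.conjTranspose_conjTranspose, Matrix.mul_assoc,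
    ← Matrix.mul_assoc A Aᴴ B, hA, Matrix.one_mul]

/-- Hadamard-type bound: if `K = P Λ_K Pᴴ` and `W = V Λ_W Vᴴ` with `P, V` unitary and
with nonnegative eigenvalues sorted in decreasing order, then
`det(I + σ⁻² K W) ≤ det(I + σ⁻² Λ_K Λ_W)`, with equality when `P = V`. -/
theorem hadamard_capacity_bound {N : ℕ} (σ : ℝ) (hσ : 0 < σ)
    (P V : Matrix (Fin N) (Fin N) ℂ)
    (hP : P ∈ Matrix.unitaryGroup (Fin N) ℂ) (hV : V ∈ Matrix.unitaryGroup (Fin N) ℂ)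
    (α lam : Fin N → ℝ) (hα : ∀ i, 0 ≤ α i) (hlam : ∀ i, 0 ≤ lam i)
    (hαsort : Antitone α) (hlamsort : Antitone lam)
    (K W : Matrix (Fin N) (Fin N) ℂ)
    (hK : K = P * Matrix.diagonal (fun i => (α i : ℂ)) * Pᴴ)
    (hW : W = V * Matrix.diagonal (fun i => (lam i : ℂ)) * Vᴴ) :
    ((1 + ((σ ^ 2)⁻¹ : ℂ) • (K * W)).det.re ≤ ∏ i, (1 + (σ ^ 2)⁻¹ * α i * lam i)) ∧
    (P = V →
      (1 + ((σ ^ 2)⁻¹ : ℂ) • (K * W)).det = ∏ i, ((1 : ℂ) + ((σ ^ 2)⁻¹ : ℂ) * α i * lam i)) := by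
  classical
  have hσ2 : (0:ℝ) < σ ^ 2 := by positivity
  set cR : ℝ := (σ ^ 2)⁻¹ with hcR_def
  have hcR : 0 ≤ cR := by positivity
  have hcast : ((σ : ℂ) ^ 2)⁻¹ = (cR : ℂ) := by
    rw [hcR_def]; push_cast; ring
  have hPH : P * Pᴴ = 1 := by
    rw [← Matrix.star_eq_conjTranspose]; exact (Matrix.mem_unitaryGroup_iff).mp hP
  have hVH : V * Vᴴ = 1 := by
    rw [← Matrix.star_eq_conjTranspose]; exact (Matrix.mem_unitaryGroup_iff).mp hV
  have hVH' : Vᴴ * V = 1 := by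
    rw [← Matrix.star_eq_conjTranspose]; exact (Matrix.mem_unitaryGroup_iff').mp hV
  -- the coefficient as it appears in the statement
  have hcoef : ((σ ^ 2)⁻¹ : ℂ) = (cR : ℂ) := hcast
  constructor
  · -- main inequality
    -- positive semidefiniteness
    have hDlampsd : (Matrix.diagonal (fun i => (lam i : ℂ))).PosSemidef := by
      rw [Matrix.posSemidef_diagonal_iff]
      intro i
      exact_mod_cast hlam i
    have hDαpsd : (Matrix.diagonal (fun i => (α i : ℂ))).PosSemidef := by
      rw [Matrix.posSemidef_diagonal_iff]
      intro i
      exact_mod_cast hα i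
    have hKpsd : K.PosSemidef := by
      rw [hK, ← Matrix.star_eq_conjTranspose]
      exact hDαpsd.mul_mul_conjTranspose_same P
    have hWpsd : W.PosSemidef := by
      rw [hW, ← Matrix.star_eq_conjTranspose]
      exact hDlampsd.mul_mul_conjTranspose_same V
    open scoped MatrixOrder in set S : Matrix (Fin N) (Fin N) ℂ := CFC.sqrt W with hS_def
    open scoped MatrixOrder in have hSS : S * S = W := CFC.sqrt_mul_sqrt_self W hWpsd.nonneg
    open scoped MatrixOrder in have hSH : Sᴴ = S := (CFC.sqrt_nonneg W).posSemidef.1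
    set C : Matrix (Fin N) (Fin N) ℂ := S * K * S with hC_def
    have hCpsd : C.PosSemidef := by
      have := hKpsd.mul_mul_conjTranspose_same S
      rwa [hSH] at this
    have hCH : C.IsHermitian := hCpsd.1
    set U : Matrix (Fin N) (Fin N) ℂ := (hCH.eigenvectorUnitary : Matrix (Fin N) (Fin N) ℂ)
      with hU_def
    set μ0 : Fin N → ℝ := hCH.eigenvalues with hμ0_def
    have hμ0nonneg : ∀ i, 0 ≤ μ0 i := fun i => hCpsd.eigenvalues_nonneg i
    have hUU : Uᴴ * U = 1 := by
      rw [← Matrix.star_eq_conjTranspose]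
      exact (Matrix.mem_unitaryGroup_iff').mp (hCH.eigenvectorUnitary).2
    have hUUH : U * Uᴴ = 1 := by
      rw [← Matrix.star_eq_conjTranspose]
      exact (Matrix.mem_unitaryGroup_iff).mp (hCH.eigenvectorUnitary).2
    have hUCU : Uᴴ * C * U = Matrix.diagonal (fun i => (μ0 i : ℂ)) := by
      have h := hCH.conjStarAlgAut_star_eigenvectorUnitary
      rw [Unitary.conjStarAlgAut_star_apply] at h
      rw [Matrix.star_eq_conjTranspose] at h
      exact h
    -- determinant in terms of eigenvalues
    have hdet : (1 + ((σ ^ 2)⁻¹ : ℂ) • (K * W)).det = ((∏ i, (1 + cR * μ0 i) : ℝ) : ℂ) := by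
      have h1 : K * W = (K * S) * S := by rw [← hSS, Matrix.mul_assoc]
      have h2 : (1 + (cR : ℂ) • ((K * S) * S)).det = (1 + (cR : ℂ) • (S * (K * S))).det := by
        have e1 : (cR : ℂ) • (K * S * S) = ((cR : ℂ) • (K * S)) * S := by
          rw [Matrix.smul_mul]
        have e2 : (cR : ℂ) • (S * (K * S)) = S * ((cR : ℂ) • (K * S)) := by
          rw [Matrix.mul_smul]
        rw [e1, e2]
        exact Matrix.det_one_add_mul_comm ((cR : ℂ) • (K * S)) S
      have h3 : S * (K * S) = C := by rw [hC_def, Matrix.mul_assoc]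
      -- conjugate by U
      have h4 : (1 : Matrix (Fin N) (Fin N) ℂ) + (cR : ℂ) • C
          = U * (Matrix.diagonal (fun i => 1 + (cR : ℂ) * (μ0 i : ℂ))) * Uᴴ := by
        have hC2 : C = U * Matrix.diagonal (fun i => (μ0 i : ℂ)) * Uᴴ := by
          have haux : U * (Uᴴ * C * U) * Uᴴ = C := by
            simp only [← Matrix.mul_assoc]
            rw [hUUH, Matrix.one_mul, Matrix.mul_assoc, hUUH, Matrix.mul_one]
          rw [← hUCU]
          exact haux.symm
        have hdiag : Matrix.diagonal (fun i => 1 + (cR : ℂ) * (μ0 i : ℂ))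
            = 1 + (cR : ℂ) • Matrix.diagonal (fun i => (μ0 i : ℂ)) := by
          rw [← Matrix.diagonal_one, ← Matrix.diagonal_smul, ← Matrix.diagonal_add]
          rfl
        rw [hdiag, Matrix.mul_add, Matrix.add_mul, Matrix.mul_one, hUUH,
          Matrix.mul_smul, Matrix.smul_mul, ← hC2]
      have h5 : (U * (Matrix.diagonal (fun i => 1 + (cR : ℂ) * (μ0 i : ℂ))) * Uᴴ).det
          = (Matrix.diagonal (fun i => 1 + (cR : ℂ) * (μ0 i : ℂ))).det := by
        rw [Matrix.det_mul, Matrix.det_mul]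
        calc U.det * (Matrix.diagonal (fun i => 1 + (cR : ℂ) * (μ0 i : ℂ))).det * Uᴴ.det
            = (Matrix.diagonal (fun i => 1 + (cR : ℂ) * (μ0 i : ℂ))).det * (U.det * Uᴴ.det) := by
              ring
          _ = _ := by rw [← Matrix.det_mul, hUUH, Matrix.det_one, mul_one]
      rw [hcoef, h1, h2, h3, h4, h5, Matrix.det_diagonal]
      push_cast
      rfl
    have hdet_re : (1 + ((σ ^ 2)⁻¹ : ℂ) • (K * W)).det.re = ∏ i, (1 + cR * μ0 i) := by
      rw [hdet, Complex.ofReal_re]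
    -- sort the eigenvalues
    set e : Equiv.Perm (Fin N) := Tuple.sort (fun i => -μ0 i) with he_def
    set μ : Fin N → ℝ := fun i => μ0 (e i) with hμ_def
    have hμa : Antitone μ := by
      intro i j hij
      have := Tuple.monotone_sort (fun i => -μ0 i) hij
      simp only [Function.comp_apply] at this
      simp only [hμ_def]
      linarith
    have hμnonneg : ∀ i, 0 ≤ μ i := fun i => hμ0nonneg _
    have hprodμ : ∏ i, (1 + cR * μ0 i) = ∏ i, (1 + cR * μ i) :=
      (Equiv.prod_comp e (fun i => 1 + cR * μ0 i)).symm
    -- Horn's inequality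
    have hHorn : ∀ (kk : ℕ) (hkk : kk ≤ N),
        ∏ j : Fin kk, μ (Fin.castLE hkk j)
          ≤ ∏ j : Fin kk, (α (Fin.castLE hkk j) * lam (Fin.castLE hkk j)) := by
      intro kk hkk
      set g : Fin kk → Fin N := fun j => e (Fin.castLE hkk j) with hg_def
      have hg : Function.Injective g := by
        intro a b hab
        exact Fin.castLE_injective hkk (e.injective hab)
      set Q : Matrix (Fin N) (Fin kk) ℂ := U.submatrix id g with hQ_def
      have hQH : Qᴴ = Uᴴ.submatrix g id := by
        rw [hQ_def, Matrix.conjTranspose_submatrix]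
      have hmul1 : ∀ (X : Matrix (Fin N) (Fin N) ℂ),
          Uᴴ.submatrix g id * X = (Uᴴ * X).submatrix g id := by
        intro X; ext p q; simp [Matrix.mul_apply]
      have hmul2 : ∀ (X : Matrix (Fin N) (Fin N) ℂ),
          X.submatrix g id * U.submatrix id g = (X * U).submatrix g g := by
        intro X; ext p q; simp [Matrix.mul_apply]
      have hQQ : Qᴴ * Q = 1 := by
        rw [hQH, hQ_def, hmul2 Uᴴ, hUU]
        ext p q
        by_cases h : p = q
        · subst h; simp
        · have : g p ≠ g q := fun hc => h (hg hc)
          simp [Matrix.one_apply, this, h]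
      have hQCQ : Qᴴ * C * Q = Matrix.diagonal (fun j => (μ (Fin.castLE hkk j) : ℂ)) := by
        rw [hQH, hmul1 C, hQ_def, hmul2 (Uᴴ * C), hUCU]
        ext p q
        by_cases h : p = q
        · subst h; simp [Matrix.diagonal_apply, hμ_def, hg_def]
        · have hgpq : g p ≠ g q := fun hc => h (hg hc)
          simp [Matrix.diagonal_apply, h, hgpq]
      have hQCQdet : (Qᴴ * C * Q).det.re = ∏ j : Fin kk, μ (Fin.castLE hkk j) := by
        rw [hQCQ, Matrix.det_diagonal, ← Complex.ofReal_prod, Complex.ofReal_re]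
      -- rewrite as compression of Dα
      set M : Matrix (Fin N) (Fin kk) ℂ := S * Q with hM_def
      set R₁ : Matrix (Fin N) (Fin kk) ℂ := Pᴴ * M with hR₁_def
      have hR1 : R₁ᴴ * Matrix.diagonal (fun i => (α i : ℂ)) * R₁ = Qᴴ * C * Q := by
        rw [hR₁_def, hM_def, hC_def, hK]
        simp only [Matrix.conjTranspose_mul, Matrix.conjTranspose_conjTranspose, hSH,
          Matrix.mul_assoc]
      set R₂ : Matrix (Fin N) (Fin kk) ℂ := Vᴴ * Q with hR₂_def
      have hR1R1 : R₁ᴴ * R₁ = R₂ᴴ * Matrix.diagonal (fun i => (lam i : ℂ)) * R₂ := by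
        have step1 : R₁ᴴ * R₁ = Mᴴ * M := by
          rw [hR₁_def]; exact conj_isometry_cancel P M hPH
        have step2 : Mᴴ * M = Qᴴ * W * Q := by
          rw [hM_def, Matrix.conjTranspose_mul, hSH, Matrix.mul_assoc,
            ← Matrix.mul_assoc S S Q, hSS, ← Matrix.mul_assoc]
        rw [step1, step2, hW, hR₂_def, Matrix.conjTranspose_mul,
          Matrix.conjTranspose_conjTranspose]
        simp only [Matrix.mul_assoc]
      have hR2R2 : R₂ᴴ * R₂ = 1 := by
        rw [hR₂_def, conj_isometry_cancel V Q hVH, hQQ]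
      have happ1 := compress_det_le hkk R₁ α hα hαsort
      have happ2 := compress_det_le hkk R₂ lam hlam hlamsort
      rw [hR2R2, Matrix.det_one] at happ2
      simp only [Complex.one_re, mul_one] at happ2
      have hαprod_nonneg : 0 ≤ ∏ j : Fin kk, α (Fin.castLE hkk j) :=
        Finset.prod_nonneg fun j _ => hα _
      calc ∏ j : Fin kk, μ (Fin.castLE hkk j)
          = (Qᴴ * C * Q).det.re := hQCQdet.symm
        _ = (R₁ᴴ * Matrix.diagonal (fun i => (α i : ℂ)) * R₁).det.re := by rw [hR1]
        _ ≤ (∏ j : Fin kk, α (Fin.castLE hkk j)) * (R₁ᴴ * R₁).det.re := happ1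
        _ = (∏ j : Fin kk, α (Fin.castLE hkk j)) *
              (R₂ᴴ * Matrix.diagonal (fun i => (lam i : ℂ)) * R₂).det.re := by rw [hR1R1]
        _ ≤ (∏ j : Fin kk, α (Fin.castLE hkk j)) * (∏ j : Fin kk, lam (Fin.castLE hkk j)) :=
            mul_le_mul_of_nonneg_left happ2 hαprod_nonneg
        _ = ∏ j : Fin kk, (α (Fin.castLE hkk j) * lam (Fin.castLE hkk j)) := by
            rw [Finset.prod_mul_distrib]
    -- apply the majorization lemma
    set x : ℕ → ℝ := fun i => if h : i < N then cR * μ ⟨i, h⟩ else 0 with hx_def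
    set y : ℕ → ℝ := fun i => if h : i < N then cR * α ⟨i, h⟩ * lam ⟨i, h⟩ else 0 with hy_def
    have hx0 : ∀ i, 0 ≤ x i := by
      intro i; rw [hx_def]; dsimp only
      split
      · exact mul_nonneg hcR (hμnonneg _)
      · exact le_rfl
    have hy0 : ∀ i, 0 ≤ y i := by
      intro i; rw [hy_def]; dsimp only
      split
      · exact mul_nonneg (mul_nonneg hcR (hα _)) (hlam _)
      · exact le_rfl
    have hxa : ∀ i j, i ≤ j → x j ≤ x i := by
      intro i j hij
      rw [hx_def]; dsimp only
      by_cases hj : j < N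
      · have hi : i < N := lt_of_le_of_lt hij hj
        rw [dif_pos hj, dif_pos hi]
        have hle : (⟨i, hi⟩ : Fin N) ≤ ⟨j, hj⟩ := by
          rw [Fin.mk_le_mk]; exact hij
        exact mul_le_mul_of_nonneg_left (hμa hle) hcR
      · rw [dif_neg hj]
        split
        · exact mul_nonneg hcR (hμnonneg _)
        · exact le_rfl
    have hprods : ∀ kk ≤ N, ∏ i ∈ range kk, x i ≤ ∏ i ∈ range kk, y i := by
      intro kk hkk
      have hx_eq : ∏ i ∈ range kk, x i = ∏ j : Fin kk, (cR * μ (Fin.castLE hkk j)) := by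
        rw [← Fin.prod_univ_eq_prod_range]
        refine Finset.prod_congr rfl fun j _ => ?_
        rw [hx_def]; dsimp only
        rw [dif_pos (lt_of_lt_of_le j.2 hkk)]
        rfl
      have hy_eq : ∏ i ∈ range kk, y i
          = ∏ j : Fin kk, (cR * (α (Fin.castLE hkk j) * lam (Fin.castLE hkk j))) := by
        rw [← Fin.prod_univ_eq_prod_range]
        refine Finset.prod_congr rfl fun j _ => ?_
        rw [hy_def]; dsimp only
        rw [dif_pos (lt_of_lt_of_le j.2 hkk)]
        rw [mul_assoc]
        rfl
      rw [hx_eq, hy_eq, Finset.prod_mul_distrib, Finset.prod_mul_distrib,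
        Finset.prod_const]
      exact mul_le_mul_of_nonneg_left (hHorn kk hkk) (pow_nonneg hcR _)
    have final := logmaj N x y hx0 hy0 hxa hprods
    have hL : ∏ i ∈ range N, (1 + x i) = ∏ i, (1 + cR * μ i) := by
      rw [← Fin.prod_univ_eq_prod_range]
      refine Finset.prod_congr rfl fun j _ => ?_
      rw [hx_def]; dsimp only
      rw [dif_pos j.2]
    have hR : ∏ i ∈ range N, (1 + y i) = ∏ i, (1 + cR * α i * lam i) := by
      rw [← Fin.prod_univ_eq_prod_range]
      refine Finset.prod_congr rfl fun j _ => ?_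
      rw [hy_def]; dsimp only
      rw [dif_pos j.2]
    calc (1 + ((σ ^ 2)⁻¹ : ℂ) • (K * W)).det.re
        = ∏ i, (1 + cR * μ i) := by rw [hdet_re, hprodμ]
      _ = ∏ i ∈ range N, (1 + x i) := hL.symm
      _ ≤ ∏ i ∈ range N, (1 + y i) := final
      _ = ∏ i, (1 + cR * α i * lam i) := hR
  · -- equality case
    intro hPV
    subst hPV
    have hKW : K * W = P * (Matrix.diagonal (fun i => (α i : ℂ)) *
        Matrix.diagonal (fun i => (lam i : ℂ))) * Pᴴ := by
      rw [hK, hW]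
      have hPH' : Pᴴ * P = 1 := by
        rw [← Matrix.star_eq_conjTranspose]; exact (Matrix.mem_unitaryGroup_iff').mp hP
      simp only [Matrix.mul_assoc]
      rw [← Matrix.mul_assoc Pᴴ P, hPH', one_mul]
      try simp only [Matrix.mul_assoc]
    have h4 : (1 : Matrix (Fin N) (Fin N) ℂ) + ((σ ^ 2)⁻¹ : ℂ) • (K * W)
        = P * (Matrix.diagonal (fun i =>
            1 + ((σ ^ 2)⁻¹ : ℂ) * ((α i : ℂ) * (lam i : ℂ)))) * Pᴴ := by
      rw [hKW]
      have hdiag : Matrix.diagonal (fun i => 1 + ((σ ^ 2)⁻¹ : ℂ) * ((α i : ℂ) * (lam i : ℂ)))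
          = 1 + ((σ ^ 2)⁻¹ : ℂ) • (Matrix.diagonal (fun i => (α i : ℂ)) *
              Matrix.diagonal (fun i => (lam i : ℂ))) := by
        rw [Matrix.diagonal_mul_diagonal, ← Matrix.diagonal_one, ← Matrix.diagonal_smul,
          ← Matrix.diagonal_add]
        rfl
      rw [hdiag, Matrix.mul_add, Matrix.add_mul, Matrix.mul_one, hPH,
        Matrix.mul_smul, Matrix.smul_mul]
    rw [h4, Matrix.det_mul, Matrix.det_mul]
    calc P.det * (Matrix.diagonal (fun i =>
            1 + ((σ ^ 2)⁻¹ : ℂ) * ((α i : ℂ) * (lam i : ℂ)))).det * Pᴴ.det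
        = (Matrix.diagonal (fun i =>
            1 + ((σ ^ 2)⁻¹ : ℂ) * ((α i : ℂ) * (lam i : ℂ)))).det * (P.det * Pᴴ.det) := by ring
      _ = (Matrix.diagonal (fun i =>
            1 + ((σ ^ 2)⁻¹ : ℂ) * ((α i : ℂ) * (lam i : ℂ)))).det := by
          rw [← Matrix.det_mul, hPH, Matrix.det_one, mul_one]
      _ = ∏ i, ((1 : ℂ) + ((σ ^ 2)⁻¹ : ℂ) * α i * lam i) := by
          rw [Matrix.det_diagonal]
          exact Finset.prod_congr rfl fun i _ => by ring
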